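/- Let P̂ be a Hermitian operator on Sym^{M+1}(ℂ^d). If Tr[(ρ ⊗ |l⟩⟨k|) P̂] = 0 for every density matrix ρ supported on Sym^M(ℂ^d) and all computational basis vectors |k⟩, |l⟩ of ℂ^d, then P̂ = 0. -/

import Mathlib

open scoped BigOperators

/-- `M`-fold tensor power `|φ⟩^{⊗M}` of a vector `φ ∈ ℂ^d`, as a vector on the
computational product basis `Fin M → Fin d`. -/
noncomputable def vecPow {d : ℕ} (M : ℕ) (φ : Fin d → ℂ) : (Fin M → Fin d) → ℂ :=
  fun f => ∏ i, φ (f i)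

/-- Rank-one operator `|v⟩⟨v|`. -/
noncomputable def projOp {n : Type*} [Fintype n] (v : n → ℂ) : Matrix n n ℂ :=
  Matrix.of fun i j => v i * star (v j)

/-- The orthogonal projector `P_+^M` onto the symmetric subspace of `(ℂ^d)^{⊗M}`. -/
noncomputable def symProj (d M : ℕ) : Matrix (Fin M → Fin d) (Fin M → Fin d) ℂ :=
  Matrix.of fun f g =>
    (∑ σ : Equiv.Perm (Fin M), if f = g ∘ σ then (1 : ℂ) else 0) / (Nat.factorial M : ℂ)

/-- `d_M^+ = C(M+d-1, M)`, the dimension of the symmetric subspace. -/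
def dPlus (d M : ℕ) : ℕ := (M + d - 1).choose M

open scoped ComplexOrder

-- ## Polynomial vanishing lemmas

lemma poly_vanish_real {p : Polynomial ℂ} (h : ∀ x : ℝ, p.eval (x : ℂ) = 0) : p = 0 := by
  refine Polynomial.eq_zero_of_infinite_isRoot p ?_
  refine Set.Infinite.mono (s := Set.range (fun x : ℝ => (x : ℂ))) ?_
    (Set.infinite_range_of_injective Complex.ofReal_injective)
  rintro z ⟨x, rfl⟩
  exact h x

lemma poly_vanish_circle {p : Polynomial ℂ}
    (h : ∀ x : ℝ, p.eval (Complex.exp (x * Complex.I)) = 0) : p = 0 := by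
  refine Polynomial.eq_zero_of_infinite_isRoot p ?_
  have hinj : Set.InjOn (fun x : ℝ => Complex.exp (x * Complex.I)) (Set.Ioo 0 1) := by
    intro a ha b hb hab
    simp only at hab
    rw [Complex.exp_eq_exp_iff_exists_int] at hab
    obtain ⟨n, hn⟩ := hab
    have : (a : ℂ) = b + n * (2 * Real.pi) := by
      have := hn
      field_simp at this ⊢
      have hI : ((a : ℂ) - b - n * (2 * Real.pi)) * Complex.I = 0 := by linear_combination Complex.I * this
      rcases mul_eq_zero.1 hI with h' | h'
      · linear_combination h'
      · exact absurd h' Complex.I_ne_zero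
    have hre : a = b + n * (2 * Real.pi) := by exact_mod_cast this
    have hpi : (2 : ℝ) * Real.pi > 6 := by
      have := Real.pi_gt_three
      linarith
    have hn0 : n = 0 := by
      rcases lt_trichotomy n 0 with hlt | heq | hgt
      · have h1 : (n : ℝ) ≤ -1 := by exact_mod_cast (by omega : n ≤ -1)
        nlinarith [ha.1, ha.2, hb.1, hb.2]
      · exact heq
      · have : (1 : ℝ) ≤ n := by exact_mod_cast hgt
        nlinarith [ha.1, ha.2, hb.1, hb.2]
    rw [hn0] at hre
    simpa using hre
  refine Set.Infinite.mono ?_ ((Set.Ioo_infinite (by norm_num)).image hinj)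
  rintro z ⟨x, _, rfl⟩
  exact h x

lemma coeffs_vanish (N : ℕ) (c : ℕ → ℕ → ℂ)
    (h : ∀ t : ℂ, ∑ a ∈ Finset.range (N+1), ∑ b ∈ Finset.range (N+1),
        (starRingEnd ℂ) t ^ a * t ^ b * c a b = 0) :
    ∀ a b, a ≤ N → b ≤ N → c a b = 0 := by
  have step1 : ∀ θ : ℝ, ∀ s : ℕ,
      ∑ a ∈ Finset.range (N+1), ∑ b ∈ Finset.range (N+1),
        (if a + b = s then (starRingEnd ℂ) (Complex.exp (θ * Complex.I)) ^ a *
          (Complex.exp (θ * Complex.I)) ^ b * c a b else 0) = 0 := by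
    intro θ s
    set z := Complex.exp ((θ : ℂ) * Complex.I) with hz
    set p : Polynomial ℂ := ∑ a ∈ Finset.range (N+1), ∑ b ∈ Finset.range (N+1),
      Polynomial.monomial (a + b) ((starRingEnd ℂ) z ^ a * z ^ b * c a b) with hp
    have hpz : p = 0 := by
      apply poly_vanish_real
      intro x
      have hx := h ((x : ℂ) * z)
      rw [hp]
      simp only [Polynomial.eval_finset_sum, Polynomial.eval_monomial]
      rw [← hx]
      refine Finset.sum_congr rfl fun a _ => Finset.sum_congr rfl fun b _ => ?_
      rw [map_mul, Complex.conj_ofReal, mul_pow, mul_pow, pow_add]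
      ring
    have hc := congrArg (fun q => Polynomial.coeff q s) hpz
    simp only [hp, Polynomial.finset_sum_coeff, Polynomial.coeff_monomial,
      Polynomial.coeff_zero] at hc
    exact hc
  intro a0 b0 ha0 hb0
  set s := a0 + b0 with hs
  set k0 := 2*N + s - 2*a0 with hk0
  set q : Polynomial ℂ := ∑ a ∈ Finset.range (N+1), ∑ b ∈ Finset.range (N+1),
    (if a + b = s then Polynomial.monomial (2*N + s - 2*a) (c a b) else 0) with hq
  have hq0 : q = 0 := by
    apply poly_vanish_circle
    intro θ
    set z := Complex.exp ((θ : ℂ) * Complex.I) with hz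
    have hz0 : z ≠ 0 := Complex.exp_ne_zero _
    have hcz : (starRingEnd ℂ) z = z⁻¹ := by
      rw [hz, ← Complex.exp_conj, ← Complex.exp_neg]
      congr 1
      simp [Complex.conj_ofReal]
    have := step1 θ s
    rw [hq]
    simp only [Polynomial.eval_finset_sum]
    calc ∑ a ∈ Finset.range (N+1), ∑ b ∈ Finset.range (N+1),
          Polynomial.eval z (if a + b = s then Polynomial.monomial (2*N + s - 2*a) (c a b) else 0)
        = ∑ a ∈ Finset.range (N+1), ∑ b ∈ Finset.range (N+1),
          z ^ (2*N) * (if a + b = s then (starRingEnd ℂ) z ^ a * z ^ b * c a b else 0) := by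
          refine Finset.sum_congr rfl fun a ha => Finset.sum_congr rfl fun b hb => ?_
          by_cases hab : a + b = s
          · simp only [hab, if_true, Polynomial.eval_monomial]
            have ha' : a < N + 1 := Finset.mem_range.1 ha
            have hpow : z ^ (2*N + s - 2*a) * z ^ a = z ^ (2*N) * z ^ b := by
              rw [← pow_add, ← pow_add]
              congr 1
              omega
            rw [hcz, inv_pow]
            field_simp
            linear_combination (c a b) * hpow
          · simp [hab]
    _ = z ^ (2*N) * ∑ a ∈ Finset.range (N+1), ∑ b ∈ Finset.range (N+1),
          (if a + b = s then (starRingEnd ℂ) z ^ a * z ^ b * c a b else 0) := by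
          rw [Finset.mul_sum]
          exact Finset.sum_congr rfl fun a _ => (Finset.mul_sum _ _ _).symm
    _ = 0 := by rw [this, mul_zero]
  have hc := congrArg (fun r => Polynomial.coeff r k0) hq0
  simp only [hq, Polynomial.finset_sum_coeff, Polynomial.coeff_zero] at hc
  rw [Finset.sum_eq_single_of_mem a0 (Finset.mem_range.2 (by omega))] at hc
  · rw [Finset.sum_eq_single_of_mem b0 (Finset.mem_range.2 (by omega))] at hc
    · rw [if_pos hs.symm, Polynomial.coeff_monomial, if_pos hk0.symm] at hc
      exact hc
    · intro b hb hne
      rw [apply_ite (fun p : Polynomial ℂ => p.coeff k0), Polynomial.coeff_monomial,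
        Polynomial.coeff_zero]
      split_ifs with h1 h2 <;> first | rfl | (exfalso; omega)
  · intro a ha hne
    refine Finset.sum_eq_zero fun b hb => ?_
    have ha' : a < N + 1 := Finset.mem_range.1 ha
    rw [apply_ite (fun p : Polynomial ℂ => p.coeff k0), Polynomial.coeff_monomial,
      Polynomial.coeff_zero]
    split_ifs with h1 h2 <;> first | rfl | (exfalso; omega)

-- ## vecPow and symProj lemmas

lemma vecPow_comp_perm {d N : ℕ} (φ : Fin d → ℂ) (x : Fin N → Fin d) (σ : Equiv.Perm (Fin N)) :
    vecPow N φ (x ∘ σ) = vecPow N φ x :=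
  Equiv.prod_comp σ (fun i => φ (x i))

lemma symProj_symm {d N : ℕ} (f g : Fin N → Fin d) :
    symProj d N f g = symProj d N g f := by
  unfold symProj
  simp only [Matrix.of_apply]
  congr 1
  refine Fintype.sum_equiv (Equiv.inv (Equiv.Perm (Fin N))) _ _ fun σ => ?_
  simp only [Equiv.inv_apply]
  refine if_congr ?_ rfl rfl
  constructor <;> intro h <;> subst h <;> funext i <;> simp

lemma factorial_ne_zero_C (N : ℕ) : ((Nat.factorial N : ℂ)) ≠ 0 := by
  exact_mod_cast Nat.factorial_ne_zero N

lemma symProj_mulVec {d N : ℕ} (φ : Fin d → ℂ) (x : Fin N → Fin d) :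
    ∑ a : Fin N → Fin d, symProj d N x a * vecPow N φ a = vecPow N φ x := by
  unfold symProj
  simp only [Matrix.of_apply]
  have h1 : ∀ a : Fin N → Fin d,
      (∑ σ : Equiv.Perm (Fin N), if x = a ∘ σ then (1:ℂ) else 0) / (Nat.factorial N : ℂ)
        * vecPow N φ a
      = (∑ σ : Equiv.Perm (Fin N), if x = a ∘ σ then vecPow N φ a else 0) / (Nat.factorial N : ℂ) := by
    intro a
    rw [div_mul_eq_mul_div, Finset.sum_mul]
    congr 1
    refine Finset.sum_congr rfl fun σ _ => ?_
    split_ifs <;> simp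
  rw [Finset.sum_congr rfl fun a _ => h1 a, ← Finset.sum_div, Finset.sum_comm]
  have h2 : ∀ σ : Equiv.Perm (Fin N),
      (∑ a : Fin N → Fin d, if x = a ∘ σ then vecPow N φ a else 0) = vecPow N φ x := by
    intro σ
    rw [Finset.sum_eq_single (x ∘ ⇑σ⁻¹)]
    · rw [if_pos (by funext i; simp), vecPow_comp_perm]
    · intro a _ hne
      rw [if_neg]
      intro hcon
      exact hne (by subst hcon; funext i; simp)
    · intro hmem; exact absurd (Finset.mem_univ _) hmem
  rw [Finset.sum_congr rfl fun σ _ => h2 σ, Finset.sum_const, Finset.card_univ]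
  simp only [Fintype.card_perm, Fintype.card_fin, nsmul_eq_mul]
  rw [mul_comm, mul_div_assoc, div_self (factorial_ne_zero_C N), mul_one]

lemma symProj_real {d N : ℕ} (f g : Fin N → Fin d) :
    (starRingEnd ℂ) (symProj d N f g) = symProj d N f g := by
  unfold symProj
  simp only [Matrix.of_apply, map_div₀, map_sum, map_natCast]
  congr 1
  refine Finset.sum_congr rfl fun σ _ => ?_
  split_ifs <;> simp

lemma vecPow_mulVec_symProj {d N : ℕ} (φ : Fin d → ℂ) (g : Fin N → Fin d) :
    ∑ y : Fin N → Fin d, vecPow N φ y * symProj d N y g = vecPow N φ g := by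
  calc ∑ y : Fin N → Fin d, vecPow N φ y * symProj d N y g
      = ∑ y : Fin N → Fin d, symProj d N g y * vecPow N φ y := by
        refine Finset.sum_congr rfl fun y _ => ?_
        rw [symProj_symm, mul_comm]
    _ = vecPow N φ g := symProj_mulVec φ g

-- ## The sesquilinear tensor-power form

lemma sum_swap4 {α β γ : Type*} [AddCommMonoid γ] (s1 s2 : Finset α) (u v : Finset β)
    (f : α → α → β → β → γ) :
    ∑ x ∈ s1, ∑ y ∈ s2, ∑ A ∈ u, ∑ B ∈ v, f x y A B
      = ∑ A ∈ u, ∑ B ∈ v, ∑ x ∈ s1, ∑ y ∈ s2, f x y A B := by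
  calc ∑ x ∈ s1, ∑ y ∈ s2, ∑ A ∈ u, ∑ B ∈ v, f x y A B
      = ∑ x ∈ s1, ∑ A ∈ u, ∑ y ∈ s2, ∑ B ∈ v, f x y A B :=
        Finset.sum_congr rfl fun x _ => Finset.sum_comm
    _ = ∑ A ∈ u, ∑ x ∈ s1, ∑ y ∈ s2, ∑ B ∈ v, f x y A B := Finset.sum_comm
    _ = ∑ A ∈ u, ∑ x ∈ s1, ∑ B ∈ v, ∑ y ∈ s2, f x y A B :=
        Finset.sum_congr rfl fun A _ => Finset.sum_congr rfl fun x _ => Finset.sum_comm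
    _ = ∑ A ∈ u, ∑ B ∈ v, ∑ x ∈ s1, ∑ y ∈ s2, f x y A B :=
        Finset.sum_congr rfl fun A _ => Finset.sum_comm

noncomputable def Bform {d N : ℕ} (P : Matrix (Fin N → Fin d) (Fin N → Fin d) ℂ)
    (χ η : Fin d → ℂ) : ℂ :=
  ∑ x : Fin N → Fin d, ∑ y : Fin N → Fin d,
    (starRingEnd ℂ) (vecPow N χ x) * P x y * vecPow N η y

lemma Bform_offdiag {d N : ℕ} (P : Matrix (Fin N → Fin d) (Fin N → Fin d) ℂ)
    (hdiag : ∀ χ : Fin d → ℂ, Bform P χ χ = 0) (φ ψ : Fin d → ℂ) :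
    Bform P φ ψ = 0 := by
  classical
  set T : Finset (Fin N) → Finset (Fin N) → ℂ := fun A B =>
    ∑ x : Fin N → Fin d, ∑ y : Fin N → Fin d,
      ((∏ r ∈ A, (starRingEnd ℂ) (ψ (x r))) * ∏ r ∈ Finset.univ \ A, (starRingEnd ℂ) (φ (x r)))
        * P x y * ((∏ r ∈ B, ψ (y r)) * ∏ r ∈ Finset.univ \ B, φ (y r)) with hT
  set c : ℕ → ℕ → ℂ := fun a b =>
    ∑ A ∈ Finset.powersetCard a (Finset.univ : Finset (Fin N)),
      ∑ B ∈ Finset.powersetCard b (Finset.univ : Finset (Fin N)), T A B with hc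
  have expand : ∀ t : ℂ,
      ∑ a ∈ Finset.range (N+1), ∑ b ∈ Finset.range (N+1),
        (starRingEnd ℂ) t ^ a * t ^ b * c a b = 0 := by
    intro t
    rw [← hdiag (fun j => φ j + t * ψ j)]
    set χt : Fin d → ℂ := fun j => φ j + t * ψ j with hχt
    have hx : ∀ x : Fin N → Fin d, (starRingEnd ℂ) (vecPow N χt x)
        = ∑ A ∈ (Finset.univ : Finset (Fin N)).powerset, (starRingEnd ℂ) t ^ A.card *
          ((∏ r ∈ A, (starRingEnd ℂ) (ψ (x r))) * ∏ r ∈ Finset.univ \ A, (starRingEnd ℂ) (φ (x r))) := by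
      intro x
      rw [vecPow, map_prod]
      have hterm : ∀ r : Fin N, (starRingEnd ℂ) (χt (x r)) =
          (starRingEnd ℂ) t * (starRingEnd ℂ) (ψ (x r)) + (starRingEnd ℂ) (φ (x r)) := by
        intro r; simp only [hχt, map_add, map_mul]; ring
      rw [Finset.prod_congr rfl (fun r _ => hterm r), Finset.prod_add]
      refine Finset.sum_congr rfl fun A _ => ?_
      rw [Finset.prod_mul_distrib, Finset.prod_const]
      ring
    have hy : ∀ y : Fin N → Fin d, vecPow N χt y
        = ∑ B ∈ (Finset.univ : Finset (Fin N)).powerset, t ^ B.card *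
          ((∏ r ∈ B, ψ (y r)) * ∏ r ∈ Finset.univ \ B, φ (y r)) := by
      intro y
      rw [vecPow]
      have hterm : ∀ r : Fin N, χt (y r) = t * ψ (y r) + φ (y r) := by
        intro r; simp only [hχt]; ring
      rw [Finset.prod_congr rfl (fun r _ => hterm r), Finset.prod_add]
      refine Finset.sum_congr rfl fun B _ => ?_
      rw [Finset.prod_mul_distrib, Finset.prod_const]
      ring
    have step : Bform P χt χt =
        ∑ A ∈ (Finset.univ : Finset (Fin N)).powerset,
          ∑ B ∈ (Finset.univ : Finset (Fin N)).powerset,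
            (starRingEnd ℂ) t ^ A.card * t ^ B.card * T A B := by
      unfold Bform
      calc ∑ x : Fin N → Fin d, ∑ y : Fin N → Fin d,
            (starRingEnd ℂ) (vecPow N χt x) * P x y * vecPow N χt y
          = ∑ x : Fin N → Fin d, ∑ y : Fin N → Fin d,
            ∑ A ∈ (Finset.univ : Finset (Fin N)).powerset,
              ∑ B ∈ (Finset.univ : Finset (Fin N)).powerset,
              (starRingEnd ℂ) t ^ A.card * t ^ B.card *
              (((∏ r ∈ A, (starRingEnd ℂ) (ψ (x r))) * ∏ r ∈ Finset.univ \ A, (starRingEnd ℂ) (φ (x r)))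
                * P x y * ((∏ r ∈ B, ψ (y r)) * ∏ r ∈ Finset.univ \ B, φ (y r))) := by
            refine Finset.sum_congr rfl fun x _ => Finset.sum_congr rfl fun y _ => ?_
            rw [hx x, hy y, Finset.sum_mul, Finset.sum_mul_sum]
            refine Finset.sum_congr rfl fun A _ => Finset.sum_congr rfl fun B _ => ?_
            ring
        _ = ∑ A ∈ (Finset.univ : Finset (Fin N)).powerset,
              ∑ B ∈ (Finset.univ : Finset (Fin N)).powerset,
              ∑ x : Fin N → Fin d, ∑ y : Fin N → Fin d,
              (starRingEnd ℂ) t ^ A.card * t ^ B.card *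
              (((∏ r ∈ A, (starRingEnd ℂ) (ψ (x r))) * ∏ r ∈ Finset.univ \ A, (starRingEnd ℂ) (φ (x r)))
                * P x y * ((∏ r ∈ B, ψ (y r)) * ∏ r ∈ Finset.univ \ B, φ (y r))) :=
            sum_swap4 _ _ _ _ _
        _ = ∑ A ∈ (Finset.univ : Finset (Fin N)).powerset,
              ∑ B ∈ (Finset.univ : Finset (Fin N)).powerset,
              (starRingEnd ℂ) t ^ A.card * t ^ B.card * T A B := by
            refine Finset.sum_congr rfl fun A _ => Finset.sum_congr rfl fun B _ => ?_
            simp only [hT, Finset.mul_sum]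
    rw [step]
    simp only [Finset.powerset_card_disjiUnion, Finset.sum_disjiUnion, Finset.card_univ,
      Fintype.card_fin]
    refine Finset.sum_congr rfl fun a ha => ?_
    refine Eq.trans ?_ Finset.sum_comm
    refine Finset.sum_congr rfl fun b hb => ?_
    simp only [hc, Finset.mul_sum]
    refine Finset.sum_congr rfl fun A hA => Finset.sum_congr rfl fun B hB => ?_
    rw [← (Finset.mem_powersetCard.1 hA).2, ← (Finset.mem_powersetCard.1 hB).2]
  have hc0N : c 0 N = 0 := coeffs_vanish N c expand 0 N (Nat.zero_le N) (le_refl N)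
  refine Eq.trans ?_ hc0N
  have huc : (Finset.univ : Finset (Fin N)).card = N := by simp
  have hN : Finset.powersetCard N (Finset.univ : Finset (Fin N)) = {Finset.univ} := by
    have h := Finset.powersetCard_self (Finset.univ : Finset (Fin N))
    rwa [huc] at h
  simp only [hc]
  rw [Finset.powersetCard_zero, hN, Finset.sum_singleton, Finset.sum_singleton]
  simp only [hT]
  unfold Bform
  refine Finset.sum_congr rfl fun x _ => Finset.sum_congr rfl fun y _ => ?_
  simp only [Finset.prod_empty, Finset.sdiff_empty, Finset.sdiff_self, one_mul, mul_one,
    Finset.prod_empty]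
  rw [vecPow, vecPow, map_prod]

-- ## Sign polarization: symmetrizer columns are spanned by tensor powers

lemma prod_ind_eq {d N : ℕ} (x y : Fin N → Fin d) :
    (∏ j, if x j = y j then (1:ℂ) else 0) = if x = y then 1 else 0 := by
  by_cases h : x = y
  · rw [if_pos h]; subst h; simp
  · rw [if_neg h]
    obtain ⟨j, hj⟩ : ∃ j, x j ≠ y j := by
      by_contra hcon
      push_neg at hcon
      exact h (funext hcon)
    exact Finset.prod_eq_zero (Finset.mem_univ j) (if_neg hj)

lemma fiber_odd_iff {N : ℕ} (m : Fin N → Fin N) :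
    (∀ i, Odd (Finset.univ.filter (fun j => m j = i)).card) ↔ Function.Bijective m := by
  constructor
  · intro hodd
    have hsum : ∑ i : Fin N, (Finset.univ.filter (fun j => m j = i)).card = N := by
      rw [← Finset.card_eq_sum_card_fiberwise (fun x _ => Finset.mem_univ (m x))]
      simp
    have hone : ∀ i : Fin N, (Finset.univ.filter (fun j => m j = i)).card = 1 := by
      have hle : ∀ i ∈ (Finset.univ : Finset (Fin N)), 1 ≤ (Finset.univ.filter (fun j => m j = i)).card :=
        fun i _ => (hodd i).pos
      have htot : ∑ i : Fin N, (1:ℕ) = ∑ i : Fin N, (Finset.univ.filter (fun j => m j = i)).card := by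
        rw [hsum]; simp
      intro i
      exact ((Finset.sum_eq_sum_iff_of_le hle).1 htot i (Finset.mem_univ i)).symm
    have hinj : Function.Injective m := by
      intro a b hab
      obtain ⟨cel, hcel⟩ := Finset.card_eq_one.1 (hone (m a))
      have ha : a ∈ Finset.univ.filter (fun j => m j = m a) := by simp
      have hb : b ∈ Finset.univ.filter (fun j => m j = m a) := by simp [hab]
      rw [hcel, Finset.mem_singleton] at ha hb
      rw [ha, hb]
    exact (Finite.injective_iff_bijective).1 hinj
  · intro hbij i
    obtain ⟨a, ha⟩ := hbij.2 i
    have : Finset.univ.filter (fun j => m j = i) = {a} := by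
      ext b
      simp only [Finset.mem_filter, Finset.mem_univ, true_and, Finset.mem_singleton]
      constructor
      · intro hb; exact hbij.1 (hb.trans ha.symm)
      · intro hb; subst hb; exact ha
    rw [this, Finset.card_singleton]
    exact odd_one

lemma signSum_eq {d N : ℕ} (f x : Fin N → Fin d) :
    ∑ ε : Fin N → Bool, (∏ i, (if ε i then (1:ℂ) else -1)) *
      vecPow N (fun j => ∑ i, (if ε i then (1:ℂ) else -1) * (if j = f i then 1 else 0)) x
    = 2^N * ∑ σ : Equiv.Perm (Fin N), (if x = f ∘ σ then (1:ℂ) else 0) := by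
  classical
  have hvp : ∀ ε : Fin N → Bool,
      vecPow N (fun j => ∑ i, (if ε i then (1:ℂ) else -1) * (if j = f i then 1 else 0)) x
      = ∑ m : Fin N → Fin N, ∏ j, ((if ε (m j) then (1:ℂ) else -1) * (if x j = f (m j) then 1 else 0)) := by
    intro ε
    rw [vecPow]
    exact Fintype.prod_sum _
  calc ∑ ε : Fin N → Bool, (∏ i, (if ε i then (1:ℂ) else -1)) *
      vecPow N (fun j => ∑ i, (if ε i then (1:ℂ) else -1) * (if j = f i then 1 else 0)) x
      = ∑ ε : Fin N → Bool, ∑ m : Fin N → Fin N,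
          ((∏ i, (if ε i then (1:ℂ) else -1)) * ∏ j, (if ε (m j) then (1:ℂ) else -1)) *
          ∏ j, (if x j = f (m j) then (1:ℂ) else 0) := by
        refine Finset.sum_congr rfl fun ε _ => ?_
        rw [hvp ε, Finset.mul_sum]
        refine Finset.sum_congr rfl fun m _ => ?_
        rw [Finset.prod_mul_distrib]
        ring
    _ = ∑ m : Fin N → Fin N,
          (∑ ε : Fin N → Bool, (∏ i, (if ε i then (1:ℂ) else -1)) * ∏ j, (if ε (m j) then (1:ℂ) else -1)) *
          ∏ j, (if x j = f (m j) then (1:ℂ) else 0) := by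
        rw [Finset.sum_comm]
        refine Finset.sum_congr rfl fun m _ => ?_
        rw [Finset.sum_mul]
    _ = ∑ m : Fin N → Fin N,
          (if Function.Bijective m then (2:ℂ)^N else 0) *
          ∏ j, (if x j = f (m j) then (1:ℂ) else 0) := by
        refine Finset.sum_congr rfl fun m _ => ?_
        congr 1
        -- inner sign sum
        have h1 : ∀ ε : Fin N → Bool,
            (∏ i, (if ε i then (1:ℂ) else -1)) * ∏ j, (if ε (m j) then (1:ℂ) else -1)
            = ∏ i, (if ε i then (1:ℂ) else -1) ^ ((Finset.univ.filter (fun j => m j = i)).card + 1) := by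
          intro ε
          have h2 : (∏ j, (if ε (m j) then (1:ℂ) else -1))
              = ∏ i, (if ε i then (1:ℂ) else -1) ^ (Finset.univ.filter (fun j => m j = i)).card := by
            rw [← Finset.prod_fiberwise' Finset.univ m (fun i => (if ε i then (1:ℂ) else -1))]
            exact Finset.prod_congr rfl fun i _ => (Finset.prod_const _)
          rw [h2, ← Finset.prod_mul_distrib]
          exact Finset.prod_congr rfl fun i _ => by rw [pow_succ]; ring
        rw [Finset.sum_congr rfl fun ε _ => h1 ε, ← Fintype.prod_sum
          (fun i (b : Bool) => (if b then (1:ℂ) else -1) ^ ((Finset.univ.filter (fun j => m j = i)).card + 1))]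
        have h3 : ∀ i : Fin N, (∑ b : Bool, (if b then (1:ℂ) else -1) ^ ((Finset.univ.filter (fun j => m j = i)).card + 1))
            = if Odd (Finset.univ.filter (fun j => m j = i)).card then 2 else 0 := by
          intro i
          rw [Fintype.sum_bool]
          simp only [Bool.false_eq_true, if_true, if_false]
          set k := (Finset.univ.filter (fun j => m j = i)).card
          rcases Nat.even_or_odd k with he | ho
          · rw [if_neg (Nat.not_odd_iff_even.2 he), one_pow, (Even.add_one he).neg_one_pow]
            ring
          · rw [if_pos ho, one_pow, (Odd.add_one ho).neg_one_pow]
            norm_num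
        rw [Finset.prod_congr rfl fun i _ => h3 i]
        by_cases hb : Function.Bijective m
        · rw [if_pos hb]
          have hodd := (fiber_odd_iff m).2 hb
          rw [Finset.prod_congr rfl fun i _ => if_pos (hodd i)]
          simp
        · rw [if_neg hb]
          obtain ⟨i, hi⟩ : ∃ i, ¬ Odd (Finset.univ.filter (fun j => m j = i)).card := by
            by_contra hcon
            push_neg at hcon
            exact hb ((fiber_odd_iff m).1 hcon)
          exact Finset.prod_eq_zero (Finset.mem_univ i) (if_neg hi)
    _ = ∑ m : Fin N → Fin N,
          (if Function.Bijective m then (2:ℂ)^N * ∏ j, (if x j = f (m j) then (1:ℂ) else 0) else 0) := by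
        refine Finset.sum_congr rfl fun m _ => ?_
        rw [ite_mul, zero_mul]
    _ = ∑ m ∈ Finset.univ.filter (fun m : Fin N → Fin N => Function.Bijective m),
          (2:ℂ)^N * ∏ j, (if x j = f (m j) then (1:ℂ) else 0) := (Finset.sum_filter _ _).symm
    _ = ∑ σ : Equiv.Perm (Fin N), (2:ℂ)^N * ∏ j, (if x j = f (σ j) then (1:ℂ) else 0) := by
        refine Finset.sum_bij' (fun m hm => Equiv.ofBijective m (Finset.mem_filter.1 hm).2)
          (fun σ _ => ⇑σ) ?_ ?_ ?_ ?_ ?_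
        · intro m hm; exact Finset.mem_univ _
        · intro σ _
          exact Finset.mem_filter.2 ⟨Finset.mem_univ _, σ.bijective⟩
        · intro m hm; rfl
        · intro σ _; exact Equiv.ext fun j => rfl
        · intro m hm; rfl
    _ = 2^N * ∑ σ : Equiv.Perm (Fin N), (if x = f ∘ σ then (1:ℂ) else 0) := by
        rw [Finset.mul_sum]
        refine Finset.sum_congr rfl fun σ _ => ?_
        congr 1
        exact prod_ind_eq x (f ∘ σ)

-- ## Density matrix lemmas

open scoped ComplexOrder

lemma projOp_posSemidef {n : Type*} [Fintype n] (v : n → ℂ) : (projOp v).PosSemidef := by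
  rw [Matrix.posSemidef_iff_dotProduct_mulVec]
  constructor
  · ext i j
    simp [projOp, Matrix.conjTranspose_apply, mul_comm]
  · intro x
    have hz : (dotProduct (star x) ((projOp v).mulVec x))
        = star (∑ j, star (v j) * x j) * (∑ j, star (v j) * x j) := by
      have hstar : star (∑ j, star (v j) * x j) = ∑ j, star (x j) * v j := by
        rw [star_sum]
        refine Finset.sum_congr rfl fun j _ => ?_
        simp only [star_mul, star_star]
      rw [hstar, Finset.sum_mul_sum]
      simp only [dotProduct, Matrix.mulVec, projOp, Matrix.of_apply, Pi.star_apply]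
      refine Finset.sum_congr rfl fun i _ => ?_
      rw [Finset.mul_sum]
      refine Finset.sum_congr rfl fun j _ => ?_
      ring
    rw [hz]
    exact star_mul_self_nonneg _

lemma trace_projOp_vecPow {d M : ℕ} (ψ : Fin d → ℂ)
    (hnorm : (∑ j, (starRingEnd ℂ) (ψ j) * ψ j) = 1) :
    (projOp (vecPow M ψ)).trace = 1 := by
  rw [Matrix.trace]
  have h1 : ∀ f : Fin M → Fin d, (projOp (vecPow M ψ)).diag f
      = ∏ i, (ψ (f i) * (starRingEnd ℂ) (ψ (f i))) := by
    intro f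
    simp only [Matrix.diag, projOp, Matrix.of_apply, vecPow]
    rw [show (star (∏ i, ψ (f i)) : ℂ) = (starRingEnd ℂ) (∏ i, ψ (f i)) from rfl, map_prod,
      ← Finset.prod_mul_distrib]
  rw [Finset.sum_congr rfl fun f _ => h1 f, ← Fintype.prod_sum (fun (_ : Fin M) (j : Fin d) => ψ j * (starRingEnd ℂ) (ψ j))]
  have h2 : (∑ j, ψ j * (starRingEnd ℂ) (ψ j)) = 1 := by
    rw [← hnorm]
    exact Finset.sum_congr rfl fun j _ => mul_comm _ _
  rw [Finset.prod_congr rfl fun i (_ : i ∈ Finset.univ) => h2]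
  simp

lemma symProj_projOp {d M : ℕ} (ψ : Fin d → ℂ) :
    symProj d M * projOp (vecPow M ψ) * symProj d M = projOp (vecPow M ψ) := by
  ext f g
  rw [Matrix.mul_apply]
  have h1 : ∀ y, (symProj d M * projOp (vecPow M ψ)) f y
      = (∑ x, symProj d M f x * vecPow M ψ x) * star (vecPow M ψ y) := by
    intro y
    rw [Matrix.mul_apply, Finset.sum_mul]
    exact Finset.sum_congr rfl fun x _ => by simp only [projOp, Matrix.of_apply]; ring
  calc ∑ y, (symProj d M * projOp (vecPow M ψ)) f y * symProj d M y g
      = ∑ y, vecPow M ψ f * (star (vecPow M ψ y) * symProj d M y g) := by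
        refine Finset.sum_congr rfl fun y _ => ?_
        rw [h1 y, symProj_mulVec]
        ring
    _ = vecPow M ψ f * (starRingEnd ℂ) (∑ y, vecPow M ψ y * symProj d M y g) := by
        rw [map_sum, Finset.mul_sum]
        refine Finset.sum_congr rfl fun y _ => ?_
        rw [map_mul, symProj_real]
        rfl
    _ = projOp (vecPow M ψ) f g := by
        rw [vecPow_mulVec_symProj]
        simp only [projOp, Matrix.of_apply]
        rfl

-- ## Final helpers

lemma sum_factor2 {α β : Type*} [Fintype α] [Fintype β] (A : α → ℂ) (B : β → ℂ) (C : ℂ) :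
    ∑ k : α, ∑ l : β, A k * B l * C = (∑ k, A k) * (∑ l, B l) * C := by
  symm
  calc (∑ k, A k) * (∑ l, B l) * C = ∑ k, (A k * (∑ l, B l) * C) := by
        rw [Finset.sum_mul, Finset.sum_mul]
    _ = ∑ k : α, ∑ l : β, A k * B l * C := by
        refine Finset.sum_congr rfl fun k _ => ?_
        rw [Finset.mul_sum, Finset.sum_mul]

noncomputable def sgnC {N : ℕ} (ε : Fin N → Bool) : ℂ := ∏ i, (if ε i then (1:ℂ) else -1)

noncomputable def sgnVec {d N : ℕ} (h : Fin N → Fin d) (ε : Fin N → Bool) : Fin d → ℂ :=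
  fun j => ∑ i, (if ε i then (1:ℂ) else -1) * (if j = h i then 1 else 0)

lemma sgn_col {d N : ℕ} (h : Fin N → Fin d) (x : Fin N → Fin d) :
    ∑ ε : Fin N → Bool, sgnC ε * vecPow N (sgnVec h ε) x
      = 2^N * (Nat.factorial N : ℂ) * symProj d N x h := by
  have h1 := signSum_eq h x
  unfold sgnC sgnVec
  rw [h1]
  have h2 : ∑ σ : Equiv.Perm (Fin N), (if x = h ∘ σ then (1:ℂ) else 0)
      = (Nat.factorial N : ℂ) * symProj d N x h := by
    unfold symProj
    simp only [Matrix.of_apply]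
    rw [mul_comm, div_mul_cancel₀ _ (factorial_ne_zero_C N)]
  rw [h2, mul_assoc]

lemma sgnVec_real {d N : ℕ} (h : Fin N → Fin d) (ε : Fin N → Bool) (x : Fin N → Fin d) :
    (starRingEnd ℂ) (vecPow N (sgnVec h ε) x) = vecPow N (sgnVec h ε) x := by
  rw [vecPow, map_prod]
  refine Finset.prod_congr rfl fun i _ => ?_
  unfold sgnVec
  rw [map_sum]
  refine Finset.sum_congr rfl fun i' _ => ?_
  rw [map_mul]
  congr 1 <;> [skip; skip] <;> split_ifs <;> simp


/-- If a Hermitian operator `P̂` on `Sym^{M+1}(ℂ^d)` satisfies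
`Tr[(ρ ⊗ |l⟩⟨k|) P̂] = 0` for every density matrix `ρ` supported on
`Sym^M(ℂ^d)` and all computational basis vectors `|k⟩, |l⟩`, then `P̂ = 0`. -/
theorem herm_on_sym_vanishes (d M : ℕ)
    (P : Matrix (Fin (M + 1) → Fin d) (Fin (M + 1) → Fin d) ℂ)
    (hherm : P.IsHermitian)
    (hsupp : symProj d (M + 1) * P * symProj d (M + 1) = P)
    (h0 : ∀ ρ : Matrix (Fin M → Fin d) (Fin M → Fin d) ℂ,
      ρ.PosSemidef → ρ.trace = 1 → symProj d M * ρ * symProj d M = ρ →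
      ∀ k l : Fin d,
        Matrix.trace
          ((Matrix.of fun f g : Fin (M + 1) → Fin d =>
              ρ (fun i => f i.castSucc) (fun i => g i.castSucc) *
              (if f (Fin.last M) = l then (1 : ℂ) else 0) *
              (if g (Fin.last M) = k then (1 : ℂ) else 0)) * P) = 0) :
    P = 0 := by
  classical
  -- Step 1: the diagonal of the form vanishes on normalized vectors
  have key : ∀ ψ : Fin d → ℂ, (∑ j, (starRingEnd ℂ) (ψ j) * ψ j) = 1 → Bform P ψ ψ = 0 := by
    intro ψ hnorm
    set ρ := projOp (vecPow M ψ) with hρdef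
    have hTR := h0 ρ (projOp_posSemidef _) (trace_projOp_vecPow ψ hnorm) (symProj_projOp ψ)
    have hsplit : ∀ x : Fin (M+1) → Fin d, vecPow (M+1) ψ x
        = vecPow M ψ (fun i => x i.castSucc) * ψ (x (Fin.last M)) := by
      intro x
      rw [vecPow, vecPow, Fin.prod_univ_castSucc]
    have htrace : ∀ k l : Fin d,
        Matrix.trace ((Matrix.of fun f g : Fin (M + 1) → Fin d =>
              ρ (fun i => f i.castSucc) (fun i => g i.castSucc) *
              (if f (Fin.last M) = l then (1 : ℂ) else 0) *
              (if g (Fin.last M) = k then (1 : ℂ) else 0)) * P)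
          = ∑ f : Fin (M+1) → Fin d, ∑ g : Fin (M+1) → Fin d,
              (ρ (fun i => f i.castSucc) (fun i => g i.castSucc) *
              (if f (Fin.last M) = l then (1 : ℂ) else 0) *
              (if g (Fin.last M) = k then (1 : ℂ) else 0)) * P g f := by
      intro k l
      rw [Matrix.trace]
      refine Finset.sum_congr rfl fun f _ => ?_
      rw [Matrix.diag, Matrix.mul_apply]
      exact Finset.sum_congr rfl fun g _ => by rw [Matrix.of_apply]
    have pick : ∀ (w : Fin d → ℂ) (j0 : Fin d),
        (∑ k, w k * (if j0 = k then (1:ℂ) else 0)) = w j0 := by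
      intro w j0
      simp [mul_ite]
    have main : Bform P ψ ψ = ∑ k : Fin d, ∑ l : Fin d, (starRingEnd ℂ) (ψ k) * ψ l *
        Matrix.trace ((Matrix.of fun f g : Fin (M + 1) → Fin d =>
              ρ (fun i => f i.castSucc) (fun i => g i.castSucc) *
              (if f (Fin.last M) = l then (1 : ℂ) else 0) *
              (if g (Fin.last M) = k then (1 : ℂ) else 0)) * P) := by
      unfold Bform
      calc ∑ x : Fin (M+1) → Fin d, ∑ y : Fin (M+1) → Fin d,
            (starRingEnd ℂ) (vecPow (M+1) ψ x) * P x y * vecPow (M+1) ψ y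
          = ∑ x : Fin (M+1) → Fin d, ∑ y : Fin (M+1) → Fin d,
            ∑ k : Fin d, ∑ l : Fin d,
              ((starRingEnd ℂ) (ψ k) * (if x (Fin.last M) = k then (1:ℂ) else 0)) *
              (ψ l * (if y (Fin.last M) = l then (1:ℂ) else 0)) *
              ((ρ (fun i => y i.castSucc) (fun i => x i.castSucc)) * P x y) := by
            refine Finset.sum_congr rfl fun x _ => Finset.sum_congr rfl fun y _ => ?_
            rw [sum_factor2, pick (fun k => (starRingEnd ℂ) (ψ k)) (x (Fin.last M)),
              pick ψ (y (Fin.last M))]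
            rw [hsplit x, hsplit y, map_mul]
            have hρ : ρ (fun i => y i.castSucc) (fun i => x i.castSucc)
                = vecPow M ψ (fun i => y i.castSucc) *
                  (starRingEnd ℂ) (vecPow M ψ (fun i => x i.castSucc)) := by
              rw [hρdef]
              simp only [projOp, Matrix.of_apply]
              rfl
            rw [hρ]
            ring
        _ = ∑ k : Fin d, ∑ l : Fin d, ∑ x : Fin (M+1) → Fin d, ∑ y : Fin (M+1) → Fin d,
              ((starRingEnd ℂ) (ψ k) * (if x (Fin.last M) = k then (1:ℂ) else 0)) *
              (ψ l * (if y (Fin.last M) = l then (1:ℂ) else 0)) *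
              ((ρ (fun i => y i.castSucc) (fun i => x i.castSucc)) * P x y) :=
            sum_swap4 _ _ _ _ _
        _ = ∑ k : Fin d, ∑ l : Fin d, (starRingEnd ℂ) (ψ k) * ψ l *
            Matrix.trace ((Matrix.of fun f g : Fin (M + 1) → Fin d =>
              ρ (fun i => f i.castSucc) (fun i => g i.castSucc) *
              (if f (Fin.last M) = l then (1 : ℂ) else 0) *
              (if g (Fin.last M) = k then (1 : ℂ) else 0)) * P) := by
            refine Finset.sum_congr rfl fun k _ => Finset.sum_congr rfl fun l _ => ?_
            rw [htrace k l]
            rw [Finset.mul_sum]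
            rw [Finset.sum_comm]
            refine Finset.sum_congr rfl fun x _ => ?_
            rw [Finset.mul_sum]
            refine Finset.sum_congr rfl fun y _ => ?_
            ring
    rw [main]
    refine Finset.sum_eq_zero fun k _ => Finset.sum_eq_zero fun l _ => ?_
    rw [hTR k l, mul_zero]
  -- Step 2: diagonal vanishes everywhere, by scaling
  have hdiag : ∀ χ : Fin d → ℂ, Bform P χ χ = 0 := by
    intro χ
    by_cases hz : χ = 0
    · subst hz
      have hvp0 : ∀ x : Fin (M+1) → Fin d, vecPow (M+1) (0 : Fin d → ℂ) x = 0 := by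
        intro x
        rw [vecPow]
        simp only [Pi.zero_apply]
        rw [Finset.prod_const]
        simp
      unfold Bform
      refine Finset.sum_eq_zero fun x _ => Finset.sum_eq_zero fun y _ => ?_
      rw [hvp0 x, hvp0 y]
      simp
    · obtain ⟨j0, hj0⟩ : ∃ j, χ j ≠ 0 := by
        by_contra hcon
        push_neg at hcon
        exact hz (funext hcon)
      set nsq := ∑ j, Complex.normSq (χ j) with hnsq
      have hpos : 0 < nsq :=
        Finset.sum_pos' (fun j _ => Complex.normSq_nonneg _)
          ⟨j0, Finset.mem_univ _, Complex.normSq_pos.2 hj0⟩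
      set r := Real.sqrt nsq with hrdef
      have hr : 0 < r := Real.sqrt_pos.2 hpos
      have hr2 : r^2 = nsq := Real.sq_sqrt hpos.le
      set ψ : Fin d → ℂ := fun j => ((r⁻¹ : ℝ) : ℂ) * χ j with hψdef
      have hψnorm : (∑ j, (starRingEnd ℂ) (ψ j) * ψ j) = 1 := by
        have h1 : ∀ j : Fin d, (starRingEnd ℂ) (ψ j) * ψ j
            = ((r⁻¹ : ℝ) : ℂ)^2 * ((Complex.normSq (χ j) : ℝ) : ℂ) := by
          intro j
          rw [hψdef]
          simp only [map_mul, Complex.conj_ofReal]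
          rw [show ((r⁻¹ : ℝ) : ℂ) * (starRingEnd ℂ) (χ j) * (((r⁻¹ : ℝ) : ℂ) * χ j)
              = ((r⁻¹ : ℝ) : ℂ)^2 * (χ j * (starRingEnd ℂ) (χ j)) from by ring,
            Complex.mul_conj]
        rw [Finset.sum_congr rfl fun j _ => h1 j, ← Finset.mul_sum, ← Complex.ofReal_sum]
        rw [← hnsq, ← hr2]
        push_cast
        field_simp
      have hχψ : ∀ j, χ j = ((r : ℝ) : ℂ) * ψ j := by
        intro j
        rw [hψdef]
        rw [← mul_assoc, ← Complex.ofReal_mul, mul_inv_cancel₀ (ne_of_gt hr)]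
        simp
      have hvp : ∀ x : Fin (M+1) → Fin d,
          vecPow (M+1) χ x = ((r : ℝ) : ℂ)^(M+1) * vecPow (M+1) ψ x := by
        intro x
        rw [vecPow, vecPow, Finset.prod_congr rfl fun i _ => hχψ (x i),
          Finset.prod_mul_distrib, Finset.prod_const]
        simp
      have hcalc : Bform P χ χ
          = ((r : ℝ) : ℂ)^(M+1) * ((r : ℝ) : ℂ)^(M+1) * Bform P ψ ψ := by
        unfold Bform
        rw [Finset.mul_sum]
        refine Finset.sum_congr rfl fun x _ => ?_
        rw [Finset.mul_sum]
        refine Finset.sum_congr rfl fun y _ => ?_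
        rw [hvp x, hvp y, map_mul, map_pow, Complex.conj_ofReal]
        ring
      rw [hcalc, key ψ hψnorm, mul_zero]
  -- Step 3: the full form vanishes
  have hB : ∀ φ ψ : Fin d → ℂ, Bform P φ ψ = 0 := fun φ ψ => Bform_offdiag P hdiag φ ψ
  -- Step 4: polarization onto symmetrizer columns
  ext g f
  show P g f = 0
  have hzero : ∑ ε : Fin (M+1) → Bool, ∑ ε' : Fin (M+1) → Bool,
      sgnC ε * sgnC ε' * Bform P (sgnVec g ε) (sgnVec f ε') = 0 :=
    Finset.sum_eq_zero fun ε _ => Finset.sum_eq_zero fun ε' _ => by rw [hB, mul_zero]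
  have hSPS : ∑ x : Fin (M+1) → Fin d, ∑ y : Fin (M+1) → Fin d,
      symProj d (M+1) g x * P x y * symProj d (M+1) y f = P g f := by
    conv_rhs => rw [← hsupp]
    rw [Matrix.mul_apply]
    rw [Finset.sum_comm]
    refine Finset.sum_congr rfl fun y _ => ?_
    rw [Matrix.mul_apply, Finset.sum_mul]
  have hval : ∑ ε : Fin (M+1) → Bool, ∑ ε' : Fin (M+1) → Bool,
      sgnC ε * sgnC ε' * Bform P (sgnVec g ε) (sgnVec f ε')
      = (2^(M+1) * (Nat.factorial (M+1) : ℂ))^2 * P g f := by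
    calc ∑ ε : Fin (M+1) → Bool, ∑ ε' : Fin (M+1) → Bool,
          sgnC ε * sgnC ε' * Bform P (sgnVec g ε) (sgnVec f ε')
        = ∑ ε : Fin (M+1) → Bool, ∑ ε' : Fin (M+1) → Bool,
            ∑ x : Fin (M+1) → Fin d, ∑ y : Fin (M+1) → Fin d,
            (sgnC ε * vecPow (M+1) (sgnVec g ε) x) * P x y *
            (sgnC ε' * vecPow (M+1) (sgnVec f ε') y) := by
          refine Finset.sum_congr rfl fun ε _ => Finset.sum_congr rfl fun ε' _ => ?_
          unfold Bform
          rw [Finset.mul_sum]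
          refine Finset.sum_congr rfl fun x _ => ?_
          rw [Finset.mul_sum]
          refine Finset.sum_congr rfl fun y _ => ?_
          rw [sgnVec_real]
          ring
      _ = ∑ x : Fin (M+1) → Fin d, ∑ y : Fin (M+1) → Fin d,
            ∑ ε : Fin (M+1) → Bool, ∑ ε' : Fin (M+1) → Bool,
            (sgnC ε * vecPow (M+1) (sgnVec g ε) x) * P x y *
            (sgnC ε' * vecPow (M+1) (sgnVec f ε') y) := sum_swap4 _ _ _ _ _
      _ = ∑ x : Fin (M+1) → Fin d, ∑ y : Fin (M+1) → Fin d,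
            (∑ ε : Fin (M+1) → Bool, sgnC ε * vecPow (M+1) (sgnVec g ε) x) * P x y *
            (∑ ε' : Fin (M+1) → Bool, sgnC ε' * vecPow (M+1) (sgnVec f ε') y) := by
          refine Finset.sum_congr rfl fun x _ => Finset.sum_congr rfl fun y _ => ?_
          calc ∑ ε : Fin (M+1) → Bool, ∑ ε' : Fin (M+1) → Bool,
                (sgnC ε * vecPow (M+1) (sgnVec g ε) x) * P x y *
                (sgnC ε' * vecPow (M+1) (sgnVec f ε') y)
              = ∑ ε : Fin (M+1) → Bool, ∑ ε' : Fin (M+1) → Bool,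
                (sgnC ε * vecPow (M+1) (sgnVec g ε) x) *
                (sgnC ε' * vecPow (M+1) (sgnVec f ε') y) * P x y := by
                refine Finset.sum_congr rfl fun ε _ => Finset.sum_congr rfl fun ε' _ => by ring
            _ = (∑ ε : Fin (M+1) → Bool, sgnC ε * vecPow (M+1) (sgnVec g ε) x) *
                (∑ ε' : Fin (M+1) → Bool, sgnC ε' * vecPow (M+1) (sgnVec f ε') y) * P x y :=
                sum_factor2 _ _ _
            _ = (∑ ε : Fin (M+1) → Bool, sgnC ε * vecPow (M+1) (sgnVec g ε) x) * P x y *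
                (∑ ε' : Fin (M+1) → Bool, sgnC ε' * vecPow (M+1) (sgnVec f ε') y) := by ring
      _ = ∑ x : Fin (M+1) → Fin d, ∑ y : Fin (M+1) → Fin d,
            (2^(M+1) * (Nat.factorial (M+1) : ℂ) * symProj d (M+1) x g) * P x y *
            (2^(M+1) * (Nat.factorial (M+1) : ℂ) * symProj d (M+1) y f) := by
          refine Finset.sum_congr rfl fun x _ => Finset.sum_congr rfl fun y _ => ?_
          rw [sgn_col g x, sgn_col f y]
      _ = (2^(M+1) * (Nat.factorial (M+1) : ℂ))^2 *
            ∑ x : Fin (M+1) → Fin d, ∑ y : Fin (M+1) → Fin d,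
            symProj d (M+1) g x * P x y * symProj d (M+1) y f := by
          rw [Finset.mul_sum]
          refine Finset.sum_congr rfl fun x _ => ?_
          rw [Finset.mul_sum]
          refine Finset.sum_congr rfl fun y _ => ?_
          rw [symProj_symm x g]
          ring
      _ = (2^(M+1) * (Nat.factorial (M+1) : ℂ))^2 * P g f := by rw [hSPS]
  have hne : (2^(M+1) * (Nat.factorial (M+1) : ℂ))^2 ≠ 0 :=
    pow_ne_zero _ (mul_ne_zero (pow_ne_zero _ two_ne_zero) (factorial_ne_zero_C _))
  have hfin := hval.symm.trans hzero
  rcases mul_eq_zero.1 hfin with h | h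
  · exact absurd h hne
  · exact h
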